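/- arXiv:1504.02807 — 2 statements merged into one kernel-verified Lean document; each statement's English description precedes it below -/
import Mathlib

section
/- Define X(a,b) = a·b + ⟨a,b⟩·1 on the purely imaginary octonions Im(O). Then X is a 2-fold vector cross product: for all a, b ∈ Im(O), ⟨X(a,b), a⟩ = 0, ⟨X(a,b), b⟩ = 0, and ⟨X(a,b), X(a,b)⟩ = ⟨a,a⟩⟨b,b⟩ - ⟨a,b⟩². -/
open Quaternion

noncomputable section

/-- Cayley–Dickson double of the quaternions: pairs `a + b·l`. -/
abbrev CD : Type := ℍ[ℝ] × ℍ[ℝ]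

/-- Cayley–Dickson multiplication with `l² = s`:
`(a+bl)(c+dl) = (ac + s·conj(d)·b) + (da + b·conj(c))l`. -/
def cdMul (s : ℝ) (x y : CD) : CD :=
  (x.1 * y.1 + s • (star y.2 * x.2), y.2 * x.1 + x.2 * star y.1)

/-- Conjugation: `conj(a+bl) = conj(a) - bl`. -/
def cdConj (x : CD) : CD := (star x.1, -x.2)

/-- The unit `1 = e₀`. -/
def cdOne : CD := (1, 0)

/-- The norm `N(x)`, i.e. the real number with `x·conj(x) = N(x)·1`. -/
def Nr (s : ℝ) (x : CD) : ℝ := ((cdMul s x (cdConj x)).1).re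

/-- The inner product obtained by polarizing the norm:
`⟨x,y⟩ = (1/2)(N(x+y) - N(x) - N(y))`. -/
def ip (s : ℝ) (x y : CD) : ℝ := (Nr s (x + y) - Nr s x - Nr s y) / 2

/-- A (split-)octonion is purely imaginary iff it is orthogonal to `1`. -/
def IsIm (s : ℝ) (x : CD) : Prop := ip s x cdOne = 0

/-- The 2-fold cross product `X(a,b) = a·b + ⟨a,b⟩·1` on the imaginary octonions. -/
def X (a b : CD) : CD := cdMul (-1) a b + (ip (-1) a b) • cdOne

set_option maxHeartbeats 2000000

/-- `X(a,b) = a·b + ⟨a,b⟩·1` is a 2-fold vector cross product on `Im(O)`: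
it is orthogonal to both arguments and `⟨X(a,b),X(a,b)⟩ = ⟨a,a⟩⟨b,b⟩ - ⟨a,b⟩²`. -/
theorem cross_product_on_imaginary_octonions (a b : CD) (ha : IsIm (-1) a) (hb : IsIm (-1) b) :
    ip (-1) (X a b) a = 0 ∧ ip (-1) (X a b) b = 0 ∧
      ip (-1) (X a b) (X a b) = ip (-1) a a * ip (-1) b b - (ip (-1) a b) ^ 2 := by
  simp only [IsIm, ip, Nr, cdMul, cdConj, cdOne, X, Prod.fst, Prod.snd, Prod.mk_add_mk,
    Prod.smul_mk, Quaternion.re_mul, Quaternion.imI_mul, Quaternion.imJ_mul, Quaternion.imK_mul,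
    Quaternion.re_add, Quaternion.imI_add, Quaternion.imJ_add, Quaternion.imK_add,
    Quaternion.re_neg, Quaternion.imI_neg, Quaternion.imJ_neg, Quaternion.imK_neg,
    Quaternion.re_smul, Quaternion.imI_smul, Quaternion.imJ_smul, Quaternion.imK_smul,
    Quaternion.re_one, Quaternion.imI_one, Quaternion.imJ_one, Quaternion.imK_one,
    Quaternion.re_zero, Quaternion.imI_zero, Quaternion.imJ_zero, Quaternion.imK_zero,
    Quaternion.re_star, Quaternion.imI_star, Quaternion.imJ_star,
    Quaternion.imK_star, smul_eq_mul, Prod.fst_add, Prod.snd_add] at *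
  obtain ⟨⟨a1,a2,a3,a4⟩, a5,a6,a7,a8⟩ := a
  obtain ⟨⟨b1,b2,b3,b4⟩, b5,b6,b7,b8⟩ := b
  dsimp only at *
  ring_nf at ha hb
  subst ha hb
  refine ⟨by ring, by ring, by ring⟩
end
end

section
/- Define X₁(a,b,c) = -a·(conj(b)·c) + ⟨a,b⟩c + ⟨b,c⟩a - ⟨c,a⟩b on the octonions O. Then X₁ is totally skew-symmetric in its three arguments. -/
open Quaternion

noncomputable section

/-- Zvengrowski's 3-fold cross product
`X₁(a,b,c) = -a(conj(b)c) + ⟨a,b⟩c + ⟨b,c⟩a - ⟨c,a⟩b` on the octonions. -/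
def X1 (a b c : CD) : CD :=
  -(cdMul (-1) a (cdMul (-1) (cdConj b) c))
    + (ip (-1) a b) • c + (ip (-1) b c) • a - (ip (-1) c a) • b


lemma ip_eq (x y : CD) : ip (-1) x y =
    x.1.re*y.1.re + x.1.imI*y.1.imI + x.1.imJ*y.1.imJ + x.1.imK*y.1.imK
    + x.2.re*y.2.re + x.2.imI*y.2.imI + x.2.imJ*y.2.imJ + x.2.imK*y.2.imK := by
  simp only [ip, Nr, cdMul, cdConj, Prod.fst_add, Prod.snd_add]
  simp [Quaternion.re_mul, Quaternion.re_add, imI_add, imJ_add, imK_add]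
  ring

set_option maxHeartbeats 2000000 in
/-- `X₁` is totally skew-symmetric in its three arguments. -/
theorem X1_totally_skew (a b c : CD) :
    X1 a b c = - X1 b a c ∧ X1 a b c = - X1 a c b ∧ X1 a b c = - X1 c b a := by
  simp only [X1, ip_eq, cdMul, cdConj]
  refine ⟨?_, ?_, ?_⟩ <;> refine Prod.ext ?_ ?_ <;>
  · simp only [Prod.fst_add, Prod.snd_add, Prod.fst_neg, Prod.snd_neg, Prod.fst_sub,
      Prod.snd_sub, Prod.smul_fst, Prod.smul_snd]
    ext <;>
    · simp only [Quaternion.re_mul, Quaternion.imI_mul, Quaternion.imJ_mul, Quaternion.imK_mul,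
        Quaternion.re_add, Quaternion.imI_add, Quaternion.imJ_add, Quaternion.imK_add,
        Quaternion.re_neg, Quaternion.imI_neg, Quaternion.imJ_neg, Quaternion.imK_neg,
        Quaternion.re_sub, Quaternion.imI_sub, Quaternion.imJ_sub, Quaternion.imK_sub,
        Quaternion.re_smul, Quaternion.imI_smul, Quaternion.imJ_smul, Quaternion.imK_smul,
        Quaternion.re_star, Quaternion.imI_star, Quaternion.imJ_star, Quaternion.imK_star,
        smul_eq_mul]
      ring
end
end
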